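/- If G^min is a minimally oriented graph for a bi-directed graph G, then there exists a total order ≤ on the vertex set extending strict boundary containment such that G^min equals the graph G^min_< produced by Algorithm 4.2 from G and ≤. -/

import Mathlib

/-- Possible edge types between an ordered pair of distinct vertices of a
simple mixed graph.  `arrowTo` at `(v, w)` means `v → w`, `arrowFrom` means
`v ← w`, `undir` means `v − w` and `bidir` means `v ↔ w`. -/
inductive EType : Type
  | none | undir | arrowTo | arrowFrom | bidir
deriving DecidableEq

/-- The edge type seen from the reversed ordered pair of vertices. -/
def EType.mirror : EType → EType
  | .none => .none
  | .undir => .undir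
  | .arrowTo => .arrowFrom
  | .arrowFrom => .arrowTo
  | .bidir => .bidir

/-- A simple mixed graph: at most one edge (undirected, directed or
bi-directed) between any two distinct vertices, and no self loops. -/
structure MixedGraph (V : Type) where
  E : V → V → EType
  no_loop : ∀ v, E v v = .none
  symm : ∀ v w, E w v = (E v w).mirror

/-- `(a, b, c)` are three consecutive vertices on the path `p`. -/
def ConsecTriple {V : Type} (p : List V) (a b c : V) : Prop :=
  ∃ l1 l2, p = l1 ++ a :: b :: c :: l2

namespace MixedGraph

variable {V : Type} (G : MixedGraph V)

/-- `v − w` is an edge of `G`. -/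
def Undir (v w : V) : Prop := G.E v w = .undir

/-- `v → w` is an edge of `G`. -/
def Dir (v w : V) : Prop := G.E v w = .arrowTo

/-- `v ↔ w` is an edge of `G`. -/
def Bidir (v w : V) : Prop := G.E v w = .bidir

/-- `v` and `w` are adjacent (joined by some edge). -/
def Adj (v w : V) : Prop := G.E v w ≠ .none

/-- The edge between `a` and `b` has an arrowhead at `b`. -/
def HeadAt (a b : V) : Prop := G.E a b = .arrowTo ∨ G.E a b = .bidir

/-- Closed boundary: `v` together with its adjacent vertices. -/
def Bd (v : V) : Set V := insert v {w | G.Adj v w}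

/-- A set of vertices is complete if all of its pairs of distinct
vertices are adjacent. -/
def Complete (S : Set V) : Prop := ∀ v ∈ S, ∀ w ∈ S, v ≠ w → G.Adj v w

/-- A vertex is simplicial if its closed boundary is complete. -/
def Simplicial (v : V) : Prop := G.Complete (G.Bd v)

/-- `v` is an ancestor of `w`: `v = w` or there is a directed path from
`v` to `w`. -/
def Anc (v w : V) : Prop := Relation.ReflTransGen G.Dir v w

/-- The set of ancestors of vertices in `C`. -/
def anSet (C : Set V) : Set V := {v | ∃ c ∈ C, G.Anc v c}

/-- `G` is an ancestral graph. -/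
def Ancestral : Prop :=
  (∀ v w, G.Dir v w → ¬ G.Anc w v) ∧
  (∀ v w, G.Undir v w → ∀ u, ¬ G.HeadAt u v) ∧
  (∀ v w, G.Bidir v w → ¬ G.Anc v w)

/-- The boundary containment property. -/
def BdContain : Prop :=
  (∀ v w, G.Undir v w → G.Bd v = G.Bd w) ∧
  (∀ v w, G.Dir v w → G.Bd v ⊆ G.Bd w)

/-- `b` is a collider between consecutive neighbours `a` and `c`. -/
def Collider (a b c : V) : Prop := G.HeadAt a b ∧ G.HeadAt c b

/-- A path: a list of distinct vertices, consecutive ones adjacent. -/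
def IsPath (p : List V) : Prop := p.Nodup ∧ p.Chain' G.Adj

/-- `p` is an m-connecting path given `C`: every non-collider on it is
outside `C` and every collider on it is an ancestor of `C`. -/
def IsMConnPath (C : Set V) (p : List V) : Prop :=
  G.IsPath p ∧
  ∀ a b c, ConsecTriple p a b c →
    (G.Collider a b c → b ∈ G.anSet C) ∧ (¬ G.Collider a b c → b ∉ C)

/-- `v` and `w` are m-connected given `C`. -/
def MConn (v w : V) (C : Set V) : Prop :=
  ∃ p, G.IsMConnPath C p ∧ p.head? = some v ∧ p.getLast? = some w

/-- `v` and `w` are m-separated given `C`. -/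
def MSep (v w : V) (C : Set V) : Prop := ¬ G.MConn v w C

/-- A maximal (ancestral) graph: every pair of distinct non-adjacent
vertices is m-separated given some set. -/
def Maximal : Prop :=
  ∀ v w, v ≠ w → ¬ G.Adj v w → ∃ C : Set V, v ∉ C ∧ w ∉ C ∧ G.MSep v w C

/-- `G` is a bi-directed graph. -/
def Bidirected : Prop := ∀ v w, G.E v w = .none ∨ G.E v w = .bidir

/-- `G` is an undirected graph. -/
def UndirectedG : Prop := ∀ v w, G.E v w = .none ∨ G.E v w = .undir

/-- `G` is a directed acyclic graph. -/
def IsDAG : Prop :=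
  (∀ v w, G.E v w = .none ∨ G.E v w = .arrowTo ∨ G.E v w = .arrowFrom) ∧
  (∀ v w, G.Dir v w → ¬ G.Anc w v)

/-- `G` and `H` have the same skeleton. -/
def SameSkeleton (H : MixedGraph V) : Prop := ∀ v w, G.Adj v w ↔ H.Adj v w

/-- `G` and `H` are Markov equivalent: their m-separation relations
coincide. -/
def MarkovEquiv (H : MixedGraph V) : Prop :=
  ∀ v w (C : Set V), v ≠ w → v ∉ C → w ∉ C → (G.MSep v w C ↔ H.MSep v w C)

open Classical in
/-- The edge map obtained from `G` by dropping all arrowheads at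
simplicial vertices. -/
noncomputable def dropE (v w : V) : EType :=
  match G.E v w with
  | .none => .none
  | .undir => .undir
  | .arrowTo => if G.Simplicial w then .undir else .arrowTo
  | .arrowFrom => if G.Simplicial v then .undir else .arrowFrom
  | .bidir =>
      if G.Simplicial v then (if G.Simplicial w then .undir else .arrowTo)
      else (if G.Simplicial w then .arrowFrom else .bidir)

/-- The graph obtained from `G` by dropping all arrowheads at simplicial
vertices; for a bi-directed graph `G` this is the simplicial graph `Gˢ`. -/
noncomputable def drop : MixedGraph V where
  E := G.dropE
  no_loop v := by simp [dropE, G.no_loop]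
  symm v w := by
    unfold dropE
    rw [G.symm v w]
    cases h : G.E v w <;>
      simp only [EType.mirror] <;> split_ifs <;> simp_all [EType.mirror]

open Classical in
/-- The edge map of the minimally oriented graph `G^min_<`: starting from
the simplicial graph, each bi-directed edge `v ↔ w` with `Bd v ⊆ Bd w`
and `v < w` is replaced by `v → w`. -/
noncomputable def gminE [LinearOrder V] (v w : V) : EType :=
  match G.dropE v w with
  | .bidir =>
      if G.Bd v ⊆ G.Bd w ∧ v < w then .arrowTo
      else if G.Bd w ⊆ G.Bd v ∧ w < v then .arrowFrom
      else .bidir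
  | e => e

/-- The graph `G^min_<` produced by Algorithm 4.2 from `G` and the total
order on `V`. -/
noncomputable def gmin [LinearOrder V] : MixedGraph V where
  E := G.gminE
  no_loop v := by
    have h := G.drop.no_loop v
    simp only [drop] at h
    simp [gminE, h]
  symm v w := by
    have h := G.drop.symm v w
    simp only [drop] at h
    unfold gminE
    rw [h]
    cases hE : G.dropE v w <;> simp only [EType.mirror]
    case bidir =>
      by_cases c1 : G.Bd v ⊆ G.Bd w ∧ v < w
      · have c2 : ¬ (G.Bd w ⊆ G.Bd v ∧ w < v) := fun h' => lt_asymm c1.2 h'.2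
        simp [c1, c2, EType.mirror]
      · by_cases c2 : G.Bd w ⊆ G.Bd v ∧ w < v
        · simp [c1, c2, EType.mirror]
        · simp [c1, c2, EType.mirror]

/-- Total number of arrowheads of `G`: the number of directed edges plus
twice the number of bi-directed edges. -/
noncomputable def arr : ℕ :=
  {p : V × V | G.Dir p.1 p.2}.ncard + {p : V × V | G.Bidir p.1 p.2}.ncard

end MixedGraph

/-- `Gm` is a minimally oriented graph for `G`. -/
def MinOriented {V : Type} (G Gm : MixedGraph V) : Prop :=
  Gm.Ancestral ∧ Gm.Maximal ∧ G.MarkovEquiv Gm ∧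
  ∀ H : MixedGraph V, H.Ancestral → H.Maximal → G.MarkovEquiv H → Gm.arr ≤ H.arr

/-! ### Auxiliary development -/

namespace StmtAux

open MixedGraph List

variable {V : Type}

lemma mirror_mirror (e : EType) : e.mirror.mirror = e := by cases e <;> rfl

lemma mirror_eq_none {e : EType} : e.mirror = .none ↔ e = .none := by
  cases e <;> simp [EType.mirror]

variable {G : MixedGraph V}

lemma adj_symm {v w : V} (h : G.Adj v w) : G.Adj w v := by
  unfold MixedGraph.Adj at *
  rw [G.symm]
  simpa [mirror_eq_none] using h

lemma adj_ne {v w : V} (h : G.Adj v w) : v ≠ w := by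
  rintro rfl; exact h (G.no_loop v)

lemma mem_Bd {v w : V} : w ∈ G.Bd v ↔ w = v ∨ G.Adj v w := by
  simp [MixedGraph.Bd]

lemma self_mem_Bd (v : V) : v ∈ G.Bd v := mem_Bd.mpr (Or.inl rfl)

lemma mem_Bd_of_adj {v w : V} (h : G.Adj v w) : w ∈ G.Bd v := mem_Bd.mpr (Or.inr h)

lemma adj_of_mem_Bd {v w : V} (h : w ∈ G.Bd v) (hne : w ≠ v) : G.Adj v w := by
  rcases mem_Bd.mp h with h' | h'
  · exact absurd h' hne
  · exact h'

lemma simplicial_bd_subset {b x : V} (h : G.Simplicial b) (hx : x ∈ G.Bd b) :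
    G.Bd b ⊆ G.Bd x := by
  intro y hy
  by_cases hxy : y = x
  · subst hxy; exact self_mem_Bd y
  · exact mem_Bd_of_adj (h x hx y hy (Ne.symm hxy))

lemma simplicial_mono {a b : V} (hsub : G.Bd a ⊆ G.Bd b) (h : G.Simplicial b) :
    G.Simplicial a := fun x hx y hy hxy => h x (hsub hx) y (hsub hy) hxy

/-! ### List and triple lemmas -/

lemma consecTriple_cons {x : V} {q : List V} {a b c : V} :
    ConsecTriple (x :: q) a b c ↔
      (x = a ∧ ∃ l2, q = b :: c :: l2) ∨ ConsecTriple q a b c := by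
  constructor
  · rintro ⟨l1, l2, h⟩
    cases l1 with
    | nil =>
      simp only [nil_append] at h
      injection h with h1 h2
      exact Or.inl ⟨h1, l2, h2⟩
    | cons e l1' =>
      simp only [cons_append] at h
      injection h with h1 h2
      exact Or.inr ⟨l1', l2, h2⟩
  · rintro (⟨rfl, l2, rfl⟩ | ⟨l1, l2, rfl⟩)
    · exact ⟨[], l2, rfl⟩
    · exact ⟨x :: l1, l2, rfl⟩

lemma consecTriple_append_left {q : List V} (u : List V) {a b c : V}
    (h : ConsecTriple q a b c) : ConsecTriple (u ++ q) a b c := by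
  obtain ⟨l1, l2, rfl⟩ := h
  exact ⟨u ++ l1, l2, by simp⟩

lemma consecTriple_append_right {u : List V} (q : List V) {a b c : V}
    (h : ConsecTriple u a b c) : ConsecTriple (u ++ q) a b c := by
  obtain ⟨l1, l2, rfl⟩ := h
  exact ⟨l1, l2 ++ q, by simp⟩

lemma not_consecTriple_short {p : List V} (hlen : p.length ≤ 2) {a b c : V} :
    ¬ ConsecTriple p a b c := by
  rintro ⟨l1, l2, rfl⟩
  simp [List.length_append] at hlen
  omega

lemma consecTriple_adj {p : List V} (hc : p.Chain' G.Adj) {a b c : V}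
    (h : ConsecTriple p a b c) : G.Adj a b ∧ G.Adj b c := by
  obtain ⟨l1, l2, rfl⟩ := h
  have h1 : List.Chain' G.Adj (a :: b :: c :: l2) := hc.suffix ⟨l1, rfl⟩
  unfold List.Chain' at h1; rw [List.isChain_cons_cons] at h1
  rw [List.isChain_cons_cons] at h1
  exact ⟨h1.1, h1.2.1⟩


lemma head?_append_cons (l1 : List V) (a : V) (t t' : List V) :
    (l1 ++ a :: t).head? = (l1 ++ a :: t').head? := by
  cases l1 <;> simp

lemma getLast?_append_cons' (l1 : List V) (a : V) (t : List V) :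
    (l1 ++ a :: t).getLast? = (a :: t).getLast? :=
  List.getLast?_append_cons l1 a t

/-- Master decomposition of consecutive triples of an append. -/
lemma ct_append_iff (u v : List V) (a b c : V) :
    ConsecTriple (u ++ v) a b c ↔
      ConsecTriple u a b c ∨ ConsecTriple v a b c ∨
      (∃ l, u = l ++ [a, b] ∧ v.head? = some c) ∨
      (∃ l l2, u = l ++ [a] ∧ v = b :: c :: l2) := by
  induction u with
  | nil =>
    simp only [nil_append]
    constructor
    · exact fun h => Or.inr (Or.inl h)
    · rintro (h | h | ⟨l, hl, -⟩ | ⟨l, l2, hl, -⟩)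
      · exact absurd h (not_consecTriple_short (by simp))
      · exact h
      · exact absurd hl (by simp)
      · exact absurd hl (by simp)
  | cons e u ih =>
    rw [cons_append, consecTriple_cons, consecTriple_cons, ih]
    constructor
    · rintro (⟨rfl, l2, hl⟩ | h | h | ⟨l, hl, hv⟩ | ⟨l, l2, hl, hv⟩)
      · cases u with
        | nil =>
          exact Or.inr (Or.inr (Or.inr ⟨[], l2, rfl, hl⟩))
        | cons f u' =>
          injection hl with hf hl
          subst hf
          cases u' with
          | nil =>
            exact Or.inr (Or.inr (Or.inl ⟨[], rfl, by rw [show v = c :: l2 from hl]; rfl⟩))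
          | cons g u'' =>
            injection hl with hg hl
            subst hg
            exact Or.inl (Or.inl ⟨rfl, u'', rfl⟩)
      · exact Or.inl (Or.inr h)
      · exact Or.inr (Or.inl h)
      · exact Or.inr (Or.inr (Or.inl ⟨e :: l, by rw [hl]; rfl, hv⟩))
      · exact Or.inr (Or.inr (Or.inr ⟨e :: l, l2, by rw [hl]; rfl, hv⟩))
    · rintro ((⟨rfl, l2, rfl⟩ | h) | h | ⟨l, hl, hv⟩ | ⟨l, l2, hl, hv⟩)
      · exact Or.inl ⟨rfl, l2 ++ v, by simp⟩
      · exact Or.inr (Or.inl h)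
      · exact Or.inr (Or.inr (Or.inl h))
      · cases l with
        | nil =>
          simp only [nil_append] at hl
          injection hl with h1 h2
          subst h1; subst h2
          cases v with
          | nil => simp at hv
          | cons z v' =>
            injection hv with hz
            subst hz
            exact Or.inl ⟨rfl, v', rfl⟩
        | cons x l' =>
          injection hl with h1 h2
          subst h1; subst h2
          exact Or.inr (Or.inr (Or.inr (Or.inl ⟨l', rfl, hv⟩)))
      · cases l with
        | nil =>
          simp only [nil_append] at hl
          injection hl with h1 h2
          subst h1; subst h2
          exact Or.inl ⟨rfl, l2, by simp [hv]⟩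
        | cons x l' =>
          injection hl with h1 h2
          subst h1; subst h2
          exact Or.inr (Or.inr (Or.inr (Or.inr ⟨l', l2, rfl, hv⟩)))


/-! ### Structure of `gmin` for a bidirected graph -/

lemma gmin_E_eq [LinearOrder V] (G : MixedGraph V) : (G.gmin).E = G.gminE := rfl

lemma gmin_cases [LinearOrder V] (hG : G.Bidirected) (v w : V) :
    (G.E v w = .none ∧ G.gminE v w = .none) ∨
    (G.E v w = .bidir ∧ G.Simplicial v ∧ G.Simplicial w ∧ G.gminE v w = .undir) ∨
    (G.E v w = .bidir ∧ G.Simplicial v ∧ ¬G.Simplicial w ∧ G.gminE v w = .arrowTo) ∨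
    (G.E v w = .bidir ∧ ¬G.Simplicial v ∧ G.Simplicial w ∧ G.gminE v w = .arrowFrom) ∨
    (G.E v w = .bidir ∧ ¬G.Simplicial v ∧ ¬G.Simplicial w ∧
      ((G.Bd v ⊆ G.Bd w ∧ v < w ∧ G.gminE v w = .arrowTo) ∨
       (¬(G.Bd v ⊆ G.Bd w ∧ v < w) ∧ G.Bd w ⊆ G.Bd v ∧ w < v ∧
         G.gminE v w = .arrowFrom) ∨
       (¬(G.Bd v ⊆ G.Bd w ∧ v < w) ∧ ¬(G.Bd w ⊆ G.Bd v ∧ w < v) ∧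
         G.gminE v w = .bidir))) := by
  classical
  rcases hG v w with h | h
  · refine Or.inl ⟨h, ?_⟩
    simp only [MixedGraph.gminE, MixedGraph.dropE, h]
  · have hd0 : G.dropE v w =
        (if G.Simplicial v then (if G.Simplicial w then EType.undir else EType.arrowTo)
         else (if G.Simplicial w then EType.arrowFrom else EType.bidir)) := by
      simp only [MixedGraph.dropE, h]
    by_cases hv : G.Simplicial v <;> by_cases hw : G.Simplicial w
    · have hd : G.dropE v w = .undir := by rw [hd0, if_pos hv, if_pos hw]
      have hE : G.gminE v w = .undir := by simp only [MixedGraph.gminE, hd]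
      exact Or.inr (Or.inl ⟨h, hv, hw, hE⟩)
    · have hd : G.dropE v w = .arrowTo := by rw [hd0, if_pos hv, if_neg hw]
      have hE : G.gminE v w = .arrowTo := by simp only [MixedGraph.gminE, hd]
      exact Or.inr (Or.inr (Or.inl ⟨h, hv, hw, hE⟩))
    · have hd : G.dropE v w = .arrowFrom := by rw [hd0, if_neg hv, if_pos hw]
      have hE : G.gminE v w = .arrowFrom := by simp only [MixedGraph.gminE, hd]
      exact Or.inr (Or.inr (Or.inr (Or.inl ⟨h, hv, hw, hE⟩)))
    · have hd : G.dropE v w = .bidir := by rw [hd0, if_neg hv, if_neg hw]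
      have hE0 : G.gminE v w =
          (if G.Bd v ⊆ G.Bd w ∧ v < w then EType.arrowTo
           else if G.Bd w ⊆ G.Bd v ∧ w < v then EType.arrowFrom else EType.bidir) := by
        simp only [MixedGraph.gminE, hd]
      by_cases h1 : G.Bd v ⊆ G.Bd w ∧ v < w
      · have hE : G.gminE v w = .arrowTo := by rw [hE0, if_pos h1]
        exact Or.inr (Or.inr (Or.inr (Or.inr ⟨h, hv, hw, Or.inl ⟨h1.1, h1.2, hE⟩⟩)))
      · by_cases h2 : G.Bd w ⊆ G.Bd v ∧ w < v
        · have hE : G.gminE v w = .arrowFrom := by rw [hE0, if_neg h1, if_pos h2]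
          exact Or.inr (Or.inr (Or.inr (Or.inr ⟨h, hv, hw,
            Or.inr (Or.inl ⟨h1, h2.1, h2.2, hE⟩)⟩)))
        · have hE : G.gminE v w = .bidir := by rw [hE0, if_neg h1, if_neg h2]
          exact Or.inr (Or.inr (Or.inr (Or.inr ⟨h, hv, hw,
            Or.inr (Or.inr ⟨h1, h2, hE⟩)⟩)))

section
variable [LinearOrder V]

lemma gminE_symm (G : MixedGraph V) (v w : V) :
    G.gminE w v = (G.gminE v w).mirror := G.gmin.symm v w

lemma gmin_adj_iff (hG : G.Bidirected) (v w : V) :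
    (G.gmin).Adj v w ↔ G.Adj v w := by
  show G.gminE v w ≠ EType.none ↔ G.E v w ≠ EType.none
  rcases gmin_cases hG v w with ⟨h1, h2⟩ | ⟨h1, h3, h4, h2⟩ | ⟨h1, h3, h4, h2⟩ |
      ⟨h1, h3, h4, h2⟩ | ⟨h1, h3, h4, ⟨h5, h6, h2⟩ | ⟨h5, h6, h7, h2⟩ | ⟨h5, h6, h2⟩⟩ <;>
    rw [h1, h2] <;> simp

lemma gmin_undir (hG : G.Bidirected) {v w : V} (h : G.gminE v w = .undir) :
    G.E v w = .bidir ∧ G.Simplicial v ∧ G.Simplicial w := by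
  rcases gmin_cases hG v w with ⟨h1, h2⟩ | ⟨h1, h3, h4, h2⟩ | ⟨h1, h3, h4, h2⟩ |
      ⟨h1, h3, h4, h2⟩ | ⟨h1, h3, h4, ⟨h5, h6, h2⟩ | ⟨h5, h6, h7, h2⟩ | ⟨h5, h6, h2⟩⟩ <;>
    rw [h] at h2 <;> first
      | exact ⟨h1, h3, h4⟩
      | cases h2

lemma gmin_arrowTo (hG : G.Bidirected) {v w : V} (h : G.gminE v w = .arrowTo) :
    G.E v w = .bidir ∧ ¬G.Simplicial w ∧
      (G.Simplicial v ∨ (¬G.Simplicial v ∧ G.Bd v ⊆ G.Bd w ∧ v < w)) := by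
  rcases gmin_cases hG v w with ⟨h1, h2⟩ | ⟨h1, h3, h4, h2⟩ | ⟨h1, h3, h4, h2⟩ |
      ⟨h1, h3, h4, h2⟩ | ⟨h1, h3, h4, ⟨h5, h6, h2⟩ | ⟨h5, h6, h7, h2⟩ | ⟨h5, h6, h2⟩⟩ <;>
    rw [h] at h2 <;> first
      | exact ⟨h1, h4, Or.inl h3⟩
      | exact ⟨h1, h4, Or.inr ⟨h3, h5, h6⟩⟩
      | cases h2

lemma gmin_bidir (hG : G.Bidirected) {v w : V} (h : G.gminE v w = .bidir) :
    G.E v w = .bidir ∧ ¬G.Simplicial v ∧ ¬G.Simplicial w ∧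
      ¬(G.Bd v ⊆ G.Bd w ∧ v < w) ∧ ¬(G.Bd w ⊆ G.Bd v ∧ w < v) := by
  rcases gmin_cases hG v w with ⟨h1, h2⟩ | ⟨h1, h3, h4, h2⟩ | ⟨h1, h3, h4, h2⟩ |
      ⟨h1, h3, h4, h2⟩ | ⟨h1, h3, h4, ⟨h5, h6, h2⟩ | ⟨h5, h6, h7, h2⟩ | ⟨h5, h6, h2⟩⟩ <;>
    rw [h] at h2 <;> first
      | exact ⟨h1, h3, h4, h5, h6⟩
      | cases h2

lemma gmin_tail_bd (hG : G.Bidirected) {b x : V}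
    (h : G.gminE b x = .undir ∨ G.gminE b x = .arrowTo) : G.Bd b ⊆ G.Bd x := by
  rcases h with h | h
  · obtain ⟨h1, h2, _⟩ := gmin_undir hG h
    exact simplicial_bd_subset h2 (mem_Bd_of_adj (by simp [MixedGraph.Adj, h1]))
  · obtain ⟨h1, _, h3 | ⟨_, h3, _⟩⟩ := gmin_arrowTo hG h
    · exact simplicial_bd_subset h3 (mem_Bd_of_adj (by simp [MixedGraph.Adj, h1]))
    · exact h3

end

/-! ### Bidirected graph facts -/

lemma G_not_dir (hG : G.Bidirected) (v w : V) : ¬ G.Dir v w := by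
  intro h
  have h2 : G.E v w = .arrowTo := h
  rcases hG v w with h' | h' <;> rw [h'] at h2 <;> cases h2

lemma G_anc_iff (hG : G.Bidirected) {v w : V} : G.Anc v w ↔ v = w := by
  constructor
  · intro h
    induction h with
    | refl => rfl
    | tail _ hstep _ => exact absurd hstep (G_not_dir hG _ _)
  · rintro rfl; exact Relation.ReflTransGen.refl

lemma G_anSet (hG : G.Bidirected) (C : Set V) : G.anSet C = C := by
  ext x
  constructor
  · rintro ⟨c, hc, hanc⟩
    rwa [(G_anc_iff hG).mp hanc]
  · exact fun h => ⟨x, h, Relation.ReflTransGen.refl⟩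

lemma G_adj_bidir (hG : G.Bidirected) {v w : V} (h : G.Adj v w) :
    G.E v w = .bidir := by
  rcases hG v w with h' | h'
  · exact absurd h' h
  · exact h'

/-- Concrete description of m-connecting paths in a bidirected graph. -/
def GPath (G : MixedGraph V) (v w : V) (C : Set V) (p : List V) : Prop :=
  p.Nodup ∧ p.Chain' G.Adj ∧ p.head? = some v ∧ p.getLast? = some w ∧
    ∀ a b c, ConsecTriple p a b c → b ∈ C

lemma G_collider (hG : G.Bidirected) {p : List V} (hc : p.Chain' G.Adj)
    {a b c : V} (h : ConsecTriple p a b c) : G.Collider a b c := by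
  obtain ⟨h1, h2⟩ := consecTriple_adj hc h
  exact ⟨Or.inr (G_adj_bidir hG h1), Or.inr (G_adj_bidir hG (adj_symm h2))⟩

lemma gpath_mconn (hG : G.Bidirected) {v w : V} {C : Set V} {p : List V}
    (h : GPath G v w C p) : G.MConn v w C := by
  obtain ⟨hnd, hch, hh, hl, hC⟩ := h
  refine ⟨p, ⟨⟨hnd, hch⟩, fun a b c hct => ⟨fun _ => ⟨b, hC a b c hct, .refl⟩,
    fun hnc => absurd (G_collider hG hch hct) hnc⟩⟩, hh, hl⟩

lemma mconn_gpath (hG : G.Bidirected) {v w : V} {C : Set V}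
    (h : G.MConn v w C) : ∃ p, GPath G v w C p := by
  obtain ⟨p, ⟨⟨hnd, hch⟩, htr⟩, hh, hl⟩ := h
  refine ⟨p, hnd, hch, hh, hl, fun a b c hct => ?_⟩
  have := (htr a b c hct).1 (G_collider hG hch hct)
  rwa [G_anSet hG] at this

lemma G_mconn_empty (hG : G.Bidirected) {v w : V} (h : G.MConn v w ∅)
    (hne : v ≠ w) : G.Adj v w := by
  obtain ⟨p, hnd, hch, hh, hl, hC⟩ := mconn_gpath hG h
  match p, hh, hl with
  | [], hh, _ => simp at hh
  | [x], hh, hl =>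
    have hx : x = v := by simpa using hh
    have hy : x = w := by simpa using hl
    exact absurd (hx.symm.trans hy) hne
  | [x, y], hh, hl =>
    have hx : x = v := by simpa using hh
    have hy : y = w := by simpa using hl
    subst hx; subst hy
    unfold List.Chain' at hch; rw [List.isChain_cons_cons] at hch
    exact hch.1
  | a :: b :: c :: r, hh, hl =>
    exact absurd (hC a b c ⟨[], r, rfl⟩) (Set.notMem_empty b)

lemma G_msep_empty (hG : G.Bidirected) {v w : V} (hna : ¬ G.Adj v w)
    (hne : v ≠ w) : G.MSep v w ∅ :=
  fun h => hna (G_mconn_empty hG h hne)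

/-! ### Surgery lemmas for paths -/

lemma ct_shortcut {l1 l2 : List V} {a b c x y z : V}
    (h : ConsecTriple (l1 ++ a :: c :: l2) x y z) :
    ConsecTriple (l1 ++ a :: b :: c :: l2) x y z ∨
      (y = a ∧ z = c ∧ ConsecTriple (l1 ++ a :: b :: c :: l2) x a b) ∨
      (x = a ∧ y = c ∧ ConsecTriple (l1 ++ a :: b :: c :: l2) b c z) := by
  rcases (ct_append_iff l1 (a :: c :: l2) x y z).mp h with
    h | h | ⟨l, hl, hv⟩ | ⟨l, l2', hl, hv⟩
  · exact Or.inl (consecTriple_append_right _ h)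
  · rw [consecTriple_cons] at h
    rcases h with ⟨rfl, l2', hl⟩ | h
    · injection hl with h1 hl
      subst h1
      cases l2 with
      | nil => cases hl
      | cons z' l2'' =>
        injection hl with h2 hl
        subst h2
        refine Or.inr (Or.inr ⟨rfl, rfl, ⟨l1 ++ [a], l2'', by simp⟩⟩)
    · rw [consecTriple_cons] at h
      rcases h with ⟨rfl, l2', hl⟩ | h
      · exact Or.inl ⟨l1 ++ [a, b], l2', by simp [hl]⟩
      · refine Or.inl ?_
        have := consecTriple_append_left (l1 ++ [a, b, c]) h
        simpa using this
  · injection hv with hv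
    subst hv
    exact Or.inl ⟨l, b :: c :: l2, by simp [hl]⟩
  · injection hv with h1 hv
    injection hv with h2 hv
    subst h1; subst h2
    exact Or.inr (Or.inl ⟨rfl, rfl, ⟨l, c :: l2, by simp [hl]⟩⟩)

lemma ct_replace {l1 l2 : List V} {a b c d x y z : V}
    (h : ConsecTriple (l1 ++ a :: d :: c :: l2) x y z) :
    ConsecTriple (l1 ++ a :: b :: c :: l2) x y z ∨
      (x = a ∧ y = d ∧ z = c) ∨
      (y = a ∧ z = d ∧ ConsecTriple (l1 ++ a :: b :: c :: l2) x a b) ∨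
      (x = d ∧ y = c ∧ ConsecTriple (l1 ++ a :: b :: c :: l2) b c z) := by
  rcases (ct_append_iff l1 (a :: d :: c :: l2) x y z).mp h with
    h | h | ⟨l, hl, hv⟩ | ⟨l, l2', hl, hv⟩
  · exact Or.inl (consecTriple_append_right _ h)
  · rw [consecTriple_cons] at h
    rcases h with ⟨rfl, l2', hl⟩ | h
    · injection hl with h1 hl
      injection hl with h2 hl
      subst h1; subst h2
      exact Or.inr (Or.inl ⟨rfl, rfl, rfl⟩)
    · rw [consecTriple_cons] at h
      rcases h with ⟨rfl, l2', hl⟩ | h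
      · injection hl with h1 hl
        subst h1
        cases l2 with
        | nil => cases hl
        | cons z' l2'' =>
          injection hl with h2 hl
          subst h2
          exact Or.inr (Or.inr (Or.inr ⟨rfl, rfl, ⟨l1 ++ [a], l2'', by simp⟩⟩))
      · rw [consecTriple_cons] at h
        rcases h with ⟨rfl, l2', hl⟩ | h
        · exact Or.inl ⟨l1 ++ [a, b], l2', by simp [hl]⟩
        · refine Or.inl ?_
          have := consecTriple_append_left (l1 ++ [a, b, c]) h
          simpa using this
  · injection hv with hv
    subst hv
    exact Or.inl ⟨l, b :: c :: l2, by simp [hl]⟩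
  · injection hv with h1 hv
    injection hv with h2 hv
    subst h1; subst h2
    exact Or.inr (Or.inr (Or.inl ⟨rfl, rfl, ⟨l, c :: l2, by simp [hl]⟩⟩))

lemma ct_dedup {l1 l2 l3 : List V} {x0 x y z : V}
    (h : ConsecTriple (l1 ++ x0 :: l3) x y z) :
    ConsecTriple (l1 ++ x0 :: l2 ++ x0 :: l3) x y z ∨ y = x0 := by
  rcases (ct_append_iff l1 (x0 :: l3) x y z).mp h with
    h | h | ⟨l, hl, hv⟩ | ⟨l, l2', hl, hv⟩
  · refine Or.inl ?_
    have := consecTriple_append_right (x0 :: l2 ++ x0 :: l3) h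
    simpa using this
  · refine Or.inl ?_
    have := consecTriple_append_left (l1 ++ x0 :: l2) h
    simpa using this
  · injection hv with hv
    subst hv
    exact Or.inl ⟨l, l2 ++ x0 :: l3, by simp [hl]⟩
  · injection hv with h1 hv
    subst h1
    exact Or.inr rfl

/-! ### `gmin` is ancestral -/

section
variable [LinearOrder V]

lemma gmin_dir_bd (hG : G.Bidirected) {v w : V} (h : (G.gmin).Dir v w) :
    G.Bd v ⊆ G.Bd w :=
  gmin_tail_bd hG (Or.inr h)

lemma gmin_anc_bd (hG : G.Bidirected) {v w : V} (h : (G.gmin).Anc v w) :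
    G.Bd v ⊆ G.Bd w := by
  induction h with
  | refl => exact subset_rfl
  | tail _ hstep ih => exact ih.trans (gmin_dir_bd hG hstep)

lemma gmin_dir_strict (hG : G.Bidirected) {v w : V} (h : (G.gmin).Dir v w)
    (hv : ¬ G.Simplicial v) :
    ¬ G.Simplicial w ∧ G.Bd v ⊆ G.Bd w ∧ v < w := by
  obtain ⟨h1, h2, h3 | ⟨h3, h4, h5⟩⟩ := gmin_arrowTo hG h
  · exact absurd h3 hv
  · exact ⟨h2, h4, h5⟩

lemma gmin_transGen_strict (hG : G.Bidirected) {v w : V}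
    (h : Relation.TransGen (G.gmin).Dir v w) (hv : ¬ G.Simplicial v) :
    ¬ G.Simplicial w ∧ G.Bd v ⊆ G.Bd w ∧ v < w := by
  induction h with
  | single h => exact gmin_dir_strict hG h hv
  | tail _ hstep ih =>
    obtain ⟨ha, hb, hc⟩ := ih
    obtain ⟨hd, he, hf⟩ := gmin_dir_strict hG hstep ha
    exact ⟨hd, hb.trans he, hc.trans hf⟩

lemma gmin_no_dir_cycle (hG : G.Bidirected) {v w : V} (h : (G.gmin).Dir v w) :
    ¬ (G.gmin).Anc w v := by
  intro hanc
  rcases Relation.reflTransGen_iff_eq_or_transGen.mp hanc with heq | htg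
  · have h' : (G.gmin).E v w = .arrowTo := h
    rw [heq] at h'
    rw [(G.gmin).no_loop] at h'
    simp at h'
  · have hw : ¬ G.Simplicial w := (gmin_arrowTo hG h).2.1
    obtain ⟨hnv, _, hlt1⟩ := gmin_transGen_strict hG htg hw
    obtain ⟨_, _, hlt2⟩ := gmin_dir_strict hG h hnv
    exact absurd hlt1 (lt_asymm hlt2)

lemma gmin_ancestral (hG : G.Bidirected) : (G.gmin).Ancestral := by
  refine ⟨fun v w h => gmin_no_dir_cycle hG h, fun v w h u => ?_, fun v w h => ?_⟩
  · have hsv := (gmin_undir hG h).2.1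
    rintro (hh | hh)
    · exact (gmin_arrowTo hG hh).2.1 hsv
    · exact (gmin_bidir hG hh).2.2.1 hsv
  · obtain ⟨_, hnv, hnw, hc1, hc2⟩ := gmin_bidir hG h
    intro hanc
    rcases Relation.reflTransGen_iff_eq_or_transGen.mp hanc with heq | htg
    · have h' : (G.gmin).E v w = .bidir := h
      rw [heq] at h'
      rw [(G.gmin).no_loop] at h'
      simp at h'
    · obtain ⟨_, hbd, hlt⟩ := gmin_transGen_strict hG htg hnv
      exact hc1 ⟨hbd, hlt⟩

lemma gmin_tail_of_not_head (hG : G.Bidirected) {x b : V} (hadj : G.Adj x b)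
    (hnh : ¬ (G.gmin).HeadAt x b) : G.Bd b ⊆ G.Bd x := by
  have hadj' : G.gminE x b ≠ .none := by
    intro h0
    exact ((gmin_adj_iff hG x b).mpr hadj) h0
  have h1 : G.gminE x b = .undir ∨ G.gminE x b = .arrowFrom := by
    cases hE : G.gminE x b
    · exact absurd hE hadj'
    · exact Or.inl rfl
    · exact absurd (Or.inl hE) hnh
    · exact Or.inr rfl
    · exact absurd (Or.inr hE) hnh
  apply gmin_tail_bd hG
  rcases h1 with h1 | h1 <;> rw [gminE_symm, h1]
  · exact Or.inl rfl
  · exact Or.inr rfl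

end

/-! ### Direction 1: m-connection in `G` gives m-connection in `gmin` -/

section
variable [LinearOrder V]

lemma D1 (hG : G.Bidirected) {v w : V} {C : Set V} :
    ∀ n (p : List V), p.length ≤ n → p.Nodup → p.Chain' G.Adj →
      p.head? = some v → p.getLast? = some w →
      (∀ a b c, ConsecTriple p a b c → b ∈ C) → (G.gmin).MConn v w C := by
  intro n
  induction n with
  | zero =>
    intro p hlen _ _ hh _ _
    obtain rfl : p = [] := List.length_eq_zero_iff.mp (Nat.le_zero.mp hlen)
    simp at hh
  | succ n ih =>
    intro p hlen hnd hch hh hl hC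
    by_cases hcol :
        ∃ a b c l1 l2, p = l1 ++ a :: b :: c :: l2 ∧ ¬ (G.gmin).Collider a b c
    · obtain ⟨a, b, c, l1, l2, rfl, hnc⟩ := hcol
      have hadj := consecTriple_adj hch (⟨l1, l2, rfl⟩ : ConsecTriple _ a b c)
      have hbdsub : G.Bd b ⊆ G.Bd a ∨ G.Bd b ⊆ G.Bd c := by
        by_cases h1 : (G.gmin).HeadAt a b
        · have h2 : ¬ (G.gmin).HeadAt c b := fun h2 => hnc ⟨h1, h2⟩
          exact Or.inr (gmin_tail_of_not_head hG (adj_symm hadj.2) h2)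
        · exact Or.inl (gmin_tail_of_not_head hG hadj.1 h1)
      have hane : a ≠ c := by
        have h3 : (a :: b :: c :: l2).Nodup :=
          (List.sublist_append_right l1 _).nodup hnd
        have h4 : a ∉ b :: c :: l2 := (List.nodup_cons.mp h3).1
        intro hEq
        exact h4 (by rw [hEq]; simp)
      have hac : G.Adj a c := by
        rcases hbdsub with hs | hs
        · exact adj_of_mem_Bd (hs (mem_Bd_of_adj hadj.2)) (Ne.symm hane)
        · exact adj_symm (adj_of_mem_Bd (hs (mem_Bd_of_adj (adj_symm hadj.1))) hane)
      -- shortcut path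
      have hsub : (l1 ++ a :: c :: l2) <+ (l1 ++ a :: b :: c :: l2) :=
        List.Sublist.append_left (((c :: l2).sublist_cons_self b).cons₂ a) l1
      have hlen' : (l1 ++ a :: c :: l2).length ≤ n := by
        have h5 := hsub.length_le
        simp only [List.length_append, List.length_cons] at hlen h5 ⊢
        omega
      have hch' : (l1 ++ a :: c :: l2).Chain' G.Adj := by
        unfold List.Chain' at hch ⊢; rw [List.isChain_append] at hch ⊢
        obtain ⟨c1, c2, seam⟩ := hch
        rw [List.isChain_cons_cons] at c2
        obtain ⟨-, c2⟩ := c2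
        rw [List.isChain_cons_cons] at c2
        obtain ⟨-, c2⟩ := c2
        exact ⟨c1, List.isChain_cons_cons.mpr ⟨hac, c2⟩, by simpa using seam⟩
      have hh' : (l1 ++ a :: c :: l2).head? = some v :=
        (head?_append_cons l1 a (c :: l2) (b :: c :: l2)).trans hh
      have hl' : (l1 ++ a :: c :: l2).getLast? = some w := by
        have e1 : (l1 ++ a :: b :: c :: l2).getLast? = (c :: l2).getLast? := by
          rw [show l1 ++ a :: b :: c :: l2 = (l1 ++ [a, b]) ++ c :: l2 by simp,
            getLast?_append_cons']
        have e2 : (l1 ++ a :: c :: l2).getLast? = (c :: l2).getLast? := by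
          rw [show l1 ++ a :: c :: l2 = (l1 ++ [a]) ++ c :: l2 by simp,
            getLast?_append_cons']
        rw [e2, ← e1]
        exact hl
      refine ih _ hlen' (hsub.nodup hnd) hch' hh' hl' ?_
      intro x y z hct
      rcases ct_shortcut (b := b) hct with h | ⟨h1, h2, h⟩ | ⟨h1, h2, h⟩
      · exact hC _ _ _ h
      · rw [h1]; exact hC _ _ _ h
      · rw [h2]; exact hC _ _ _ h
    · refine ⟨p, ⟨⟨hnd, hch.imp fun {x y} hadj => (gmin_adj_iff hG x y).mpr hadj⟩, ?_⟩,
        hh, hl⟩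
      intro a b c hct
      have hcol' : (G.gmin).Collider a b c := by
        by_contra hn
        obtain ⟨l1, l2, hp⟩ := hct
        exact hcol ⟨a, b, c, l1, l2, hp, hn⟩
      exact ⟨fun _ => ⟨b, hC a b c hct, Relation.ReflTransGen.refl⟩,
        fun hncol => absurd hcol' hncol⟩

lemma mconn_D1 (hG : G.Bidirected) {v w : V} {C : Set V} (h : G.MConn v w C) :
    (G.gmin).MConn v w C := by
  obtain ⟨p, hp⟩ := mconn_gpath hG h
  obtain ⟨hnd, hch, hh, hl, hC⟩ := hp
  exact D1 hG p.length p le_rfl hnd hch hh hl hC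

end

/-! ### Direction 2: m-connection in `gmin` gives m-connection in `G` -/

lemma exists_dup {l : List V} (h : ¬ l.Nodup) :
    ∃ l1 x l2 l3, l = l1 ++ x :: l2 ++ x :: l3 := by
  induction l with
  | nil => exact absurd List.nodup_nil h
  | cons a t ih =>
    rw [List.nodup_cons] at h
    by_cases hat : a ∈ t
    · obtain ⟨s, t', rfl⟩ := List.append_of_mem hat
      exact ⟨[], a, s, t', by simp⟩
    · have hnt : ¬ t.Nodup := fun hn => h ⟨hat, hn⟩
      obtain ⟨l1, x, l2, l3, rfl⟩ := ih hnt
      exact ⟨a :: l1, x, l2, l3, by simp⟩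

open Classical in
/-- Number of elements of `q` outside `C`. -/
noncomputable def cnt (C : Set V) (q : List V) : ℕ :=
  q.countP (fun x => decide (x ∉ C))

lemma cnt_append (C : Set V) (l l' : List V) :
    cnt C (l ++ l') = cnt C l + cnt C l' := List.countP_append

open Classical in
lemma cnt_cons (C : Set V) (x : V) (l : List V) :
    cnt C (x :: l) = cnt C l + (if x ∈ C then 0 else 1) := by
  simp only [cnt, List.countP_cons]
  by_cases h : x ∈ C <;> simp [h]

lemma cnt_sublist {C : Set V} {l l' : List V} (h : l <+ l') :
    cnt C l ≤ cnt C l' := h.countP_le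

lemma shortcut_build {l1 l2 : List V} {a b c v w : V}
    (hch : (l1 ++ a :: b :: c :: l2).Chain' G.Adj) (hac : G.Adj a c)
    (hh : (l1 ++ a :: b :: c :: l2).head? = some v)
    (hl : (l1 ++ a :: b :: c :: l2).getLast? = some w) :
    (l1 ++ a :: c :: l2) <+ (l1 ++ a :: b :: c :: l2) ∧
      (l1 ++ a :: c :: l2).Chain' G.Adj ∧
      (l1 ++ a :: c :: l2).head? = some v ∧
      (l1 ++ a :: c :: l2).getLast? = some w := by
  refine ⟨List.Sublist.append_left (((c :: l2).sublist_cons_self b).cons₂ a) l1,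
    ?_, ?_, ?_⟩
  · unfold List.Chain' at hch ⊢; rw [List.isChain_append] at hch ⊢
    obtain ⟨c1, c2, seam⟩ := hch
    rw [List.isChain_cons_cons] at c2
    obtain ⟨-, c2⟩ := c2
    rw [List.isChain_cons_cons] at c2
    obtain ⟨-, c2⟩ := c2
    exact ⟨c1, List.isChain_cons_cons.mpr ⟨hac, c2⟩, by simpa using seam⟩
  · exact (head?_append_cons l1 a (c :: l2) (b :: c :: l2)).trans hh
  · have e1 : (l1 ++ a :: b :: c :: l2).getLast? = (c :: l2).getLast? := by
      rw [show l1 ++ a :: b :: c :: l2 = (l1 ++ [a, b]) ++ c :: l2 by simp,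
        getLast?_append_cons']
    have e2 : (l1 ++ a :: c :: l2).getLast? = (c :: l2).getLast? := by
      rw [show l1 ++ a :: c :: l2 = (l1 ++ [a]) ++ c :: l2 by simp,
        getLast?_append_cons']
    rw [e2, ← e1]
    exact hl

lemma replace_build {l1 l2 : List V} {a b c d v w : V}
    (hch : (l1 ++ a :: b :: c :: l2).Chain' G.Adj)
    (had : G.Adj a d) (hdc : G.Adj d c)
    (hh : (l1 ++ a :: b :: c :: l2).head? = some v)
    (hl : (l1 ++ a :: b :: c :: l2).getLast? = some w) :
    (l1 ++ a :: d :: c :: l2).Chain' G.Adj ∧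
      (l1 ++ a :: d :: c :: l2).head? = some v ∧
      (l1 ++ a :: d :: c :: l2).getLast? = some w := by
  refine ⟨?_, ?_, ?_⟩
  · unfold List.Chain' at hch ⊢; rw [List.isChain_append] at hch ⊢
    obtain ⟨c1, c2, seam⟩ := hch
    rw [List.isChain_cons_cons] at c2
    obtain ⟨-, c2⟩ := c2
    rw [List.isChain_cons_cons] at c2
    obtain ⟨-, c2⟩ := c2
    exact ⟨c1, List.isChain_cons_cons.mpr ⟨had, List.isChain_cons_cons.mpr ⟨hdc, c2⟩⟩,
      by simpa using seam⟩
  · exact (head?_append_cons l1 a (d :: c :: l2) (b :: c :: l2)).trans hh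
  · have e1 : (l1 ++ a :: b :: c :: l2).getLast? = (c :: l2).getLast? := by
      rw [show l1 ++ a :: b :: c :: l2 = (l1 ++ [a, b]) ++ c :: l2 by simp,
        getLast?_append_cons']
    have e2 : (l1 ++ a :: d :: c :: l2).getLast? = (c :: l2).getLast? := by
      rw [show l1 ++ a :: d :: c :: l2 = (l1 ++ [a, d]) ++ c :: l2 by simp,
        getLast?_append_cons']
    rw [e2, ← e1]
    exact hl

section
variable [LinearOrder V]

/-- Invariant on interior triples during the path surgery. -/
def Pinv (G : MixedGraph V) [LinearOrder V] (C : Set V) (a b c : V) : Prop :=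
  b ∈ C ∨ (∃ d ∈ C, G.Bd b ⊆ G.Bd d) ∨ G.Simplicial b ∨
    (G.Bd b ⊆ G.Bd a ∧ b < a) ∨ (G.Bd b ⊆ G.Bd c ∧ b < c)

lemma gmin_noncollider_P (hG : G.Bidirected) {x b : V} (hadj : G.Adj x b)
    (hnh : ¬ (G.gmin).HeadAt x b) :
    G.Simplicial b ∨ (G.Bd b ⊆ G.Bd x ∧ b < x) := by
  have hadj' : G.gminE x b ≠ .none := fun h0 => ((gmin_adj_iff hG x b).mpr hadj) h0
  have h1 : G.gminE x b = .undir ∨ G.gminE x b = .arrowFrom := by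
    cases hE : G.gminE x b
    · exact absurd hE hadj'
    · exact Or.inl rfl
    · exact absurd (Or.inl hE) hnh
    · exact Or.inr rfl
    · exact absurd (Or.inr hE) hnh
  rcases h1 with h1 | h1
  · have h2 : G.gminE b x = .undir := by rw [gminE_symm, h1]; rfl
    exact Or.inl (gmin_undir hG h2).2.1
  · have h2 : G.gminE b x = .arrowTo := by rw [gminE_symm, h1]; rfl
    rcases (gmin_arrowTo hG h2).2.2 with h3 | ⟨-, h4, h5⟩
    · exact Or.inl h3
    · exact Or.inr ⟨h4, h5⟩

lemma D2core [DecidableEq V] (hG : G.Bidirected) {v w : V} {C : Set V} :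
    ∀ N (q : List V), q.length + cnt C q ≤ N → q.Chain' G.Adj →
      q.head? = some v → q.getLast? = some w →
      (∀ a b c, ConsecTriple q a b c → Pinv G C a b c) →
      (∀ x, 1 < q.count x → x ∈ C) →
      ∃ p, GPath G v w C p := by
  intro N
  induction N with
  | zero =>
    intro q hN _ hh _ _ _
    obtain rfl : q = [] := List.length_eq_zero_iff.mp (by omega)
    simp at hh
  | succ N ih =>
    intro q hN hch hh hl hP hdup
    by_cases hnd : q.Nodup
    · by_cases hbad : ∃ a b c l1 l2, q = l1 ++ a :: b :: c :: l2 ∧ b ∉ C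
      · obtain ⟨a, b, c, l1, l2, rfl, hbC⟩ := hbad
        have hadj := consecTriple_adj hch (⟨l1, l2, rfl⟩ : ConsecTriple _ a b c)
        have h3 : (a :: b :: c :: l2).Nodup :=
          (List.sublist_append_right l1 _).nodup hnd
        have hab : a ≠ b := by
          intro hEq; exact (List.nodup_cons.mp h3).1 (by rw [hEq]; simp)
        have hac : a ≠ c := by
          intro hEq; exact (List.nodup_cons.mp h3).1 (by rw [hEq]; simp)
        have hbc : b ≠ c := by
          intro hEq
          exact (List.nodup_cons.mp (List.nodup_cons.mp h3).2).1 (by rw [hEq]; simp)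
        rcases hP a b c ⟨l1, l2, rfl⟩ with hPb | ⟨d, hdC, hbd⟩ | hsimp |
            ⟨hsub, hlt⟩ | ⟨hsub, hlt⟩
        · exact absurd hPb hbC
        · -- replacement by d ∈ C
          have hbd' : b ≠ d := fun hEq => hbC (hEq ▸ hdC)
          by_cases had : a = d
          · -- a = d : shortcut
            have hacAdj : G.Adj a c := by
              have : c ∈ G.Bd d := hbd (mem_Bd_of_adj hadj.2)
              rw [← had] at this
              exact adj_of_mem_Bd this (Ne.symm hac)
            obtain ⟨hsubl, hch', hh', hl'⟩ := shortcut_build hch hacAdj hh hl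
            refine ih _ (by
              have h5 := hsubl.length_le
              have h6 := cnt_sublist (C := C) hsubl
              simp only [List.length_append, List.length_cons] at hN h5 ⊢
              omega) hch' hh' hl' ?_
              (fun x hx => hdup x (lt_of_lt_of_le hx (hsubl.count_le x)))
            intro x y z hct
            rcases ct_shortcut (b := b) hct with h | ⟨h1, h2, h⟩ | ⟨h1, h2, h⟩
            · exact hP _ _ _ h
            · rw [h1]; exact Or.inl (by rw [had]; exact hdC)
            · rw [h1, h2]
              rcases hP b c z h with h' | h' | h' | ⟨hs, hl2⟩ | h'
              · exact Or.inl h'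
              · exact Or.inr (Or.inl h')
              · exact Or.inr (Or.inr (Or.inl h'))
              · exact Or.inr (Or.inl ⟨d, hdC, hs.trans hbd⟩)
              · exact Or.inr (Or.inr (Or.inr (Or.inr h')))
          · by_cases hcd : c = d
            · -- c = d : shortcut
              have hacAdj : G.Adj a c := by
                have : a ∈ G.Bd d := hbd (mem_Bd_of_adj (adj_symm hadj.1))
                rw [← hcd] at this
                exact adj_symm (adj_of_mem_Bd this hac)
              obtain ⟨hsubl, hch', hh', hl'⟩ := shortcut_build hch hacAdj hh hl
              refine ih _ (by
                have h5 := hsubl.length_le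
                have h6 := cnt_sublist (C := C) hsubl
                simp only [List.length_append, List.length_cons] at hN h5 ⊢
                omega) hch' hh' hl' ?_
                (fun x hx => hdup x (lt_of_lt_of_le hx (hsubl.count_le x)))
              intro x y z hct
              rcases ct_shortcut (b := b) hct with h | ⟨h1, h2, h⟩ | ⟨h1, h2, h⟩
              · exact hP _ _ _ h
              · rw [h1, h2]
                rcases hP x a b h with h' | h' | h' | h' | ⟨hs, hl2⟩
                · exact Or.inl h'
                · exact Or.inr (Or.inl h')
                · exact Or.inr (Or.inr (Or.inl h'))
                · exact Or.inr (Or.inr (Or.inr (Or.inl h')))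
                · exact Or.inr (Or.inl ⟨d, hdC, hs.trans hbd⟩)
              · rw [h2]; exact Or.inl (by rw [hcd]; exact hdC)
            · -- genuine replacement
              have hadAdj : G.Adj a d := by
                have : a ∈ G.Bd d := hbd (mem_Bd_of_adj (adj_symm hadj.1))
                exact adj_symm (adj_of_mem_Bd this had)
              have hdcAdj : G.Adj d c := by
                have : c ∈ G.Bd d := hbd (mem_Bd_of_adj hadj.2)
                exact adj_of_mem_Bd this hcd
              obtain ⟨hch', hh', hl'⟩ := replace_build hch hadAdj hdcAdj hh hl
              have hcnt : cnt C (l1 ++ a :: d :: c :: l2) + 1 =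
                  cnt C (l1 ++ a :: b :: c :: l2) := by
                simp only [cnt_append, cnt_cons]
                rw [if_neg hbC, if_pos hdC]
                ring
              refine ih _ (by
                simp only [List.length_append, List.length_cons] at hN ⊢
                omega) hch' hh' hl' ?_ ?_
              · intro x y z hct
                rcases ct_replace (b := b) hct with h | ⟨h1, h2, h3⟩ |
                    ⟨h1, h2, h⟩ | ⟨h1, h2, h⟩
                · exact hP _ _ _ h
                · rw [h2]; exact Or.inl hdC
                · rw [h1, h2]
                  rcases hP x a b h with h' | h' | h' | h' | ⟨hs, hl2⟩
                  · exact Or.inl h'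
                  · exact Or.inr (Or.inl h')
                  · exact Or.inr (Or.inr (Or.inl h'))
                  · exact Or.inr (Or.inr (Or.inr (Or.inl h')))
                  · exact Or.inr (Or.inl ⟨d, hdC, hs.trans hbd⟩)
                · rw [h1, h2]
                  rcases hP b c z h with h' | h' | h' | ⟨hs, hl2⟩ | h'
                  · exact Or.inl h'
                  · exact Or.inr (Or.inl h')
                  · exact Or.inr (Or.inr (Or.inl h'))
                  · exact Or.inr (Or.inl ⟨d, hdC, hs.trans hbd⟩)
                  · exact Or.inr (Or.inr (Or.inr (Or.inr h')))
              · intro x hx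
                by_cases hxd : x = d
                · exact hxd ▸ hdC
                · refine hdup x (lt_of_lt_of_le hx ?_)
                  have e1 : List.count x (l1 ++ a :: d :: c :: l2) =
                      List.count x l1 + List.count x [a] +
                        (List.count x [d] + List.count x (c :: l2)) := by
                    rw [show l1 ++ a :: d :: c :: l2 =
                      (l1 ++ [a]) ++ ([d] ++ (c :: l2)) by simp,
                      List.count_append, List.count_append, List.count_append]
                  have e2 : List.count x (l1 ++ a :: b :: c :: l2) =
                      List.count x l1 + List.count x [a] +
                        (List.count x [b] + List.count x (c :: l2)) := by
                    rw [show l1 ++ a :: b :: c :: l2 =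
                      (l1 ++ [a]) ++ ([b] ++ (c :: l2)) by simp,
                      List.count_append, List.count_append, List.count_append]
                  have hd0 : List.count x [d] = 0 :=
                    List.count_eq_zero_of_not_mem (by simp [hxd])
                  omega
        · -- b simplicial : shortcut
          have hacAdj : G.Adj a c :=
            hsimp a (mem_Bd_of_adj (adj_symm hadj.1)) c (mem_Bd_of_adj hadj.2) hac
          obtain ⟨hsubl, hch', hh', hl'⟩ := shortcut_build hch hacAdj hh hl
          refine ih _ (by
            have h5 := hsubl.length_le
            have h6 := cnt_sublist (C := C) hsubl
            simp only [List.length_append, List.length_cons] at hN h5 ⊢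
            omega) hch' hh' hl' ?_
            (fun x hx => hdup x (lt_of_lt_of_le hx (hsubl.count_le x)))
          intro x y z hct
          rcases ct_shortcut (b := b) hct with h | ⟨h1, h2, h⟩ | ⟨h1, h2, h⟩
          · exact hP _ _ _ h
          · rw [h1, h2]
            rcases hP x a b h with h' | h' | h' | h' | ⟨hs, hl2⟩
            · exact Or.inl h'
            · exact Or.inr (Or.inl h')
            · exact Or.inr (Or.inr (Or.inl h'))
            · exact Or.inr (Or.inr (Or.inr (Or.inl h')))
            · exact Or.inr (Or.inr (Or.inl (simplicial_mono hs hsimp)))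
          · rw [h1, h2]
            rcases hP b c z h with h' | h' | h' | ⟨hs, hl2⟩ | h'
            · exact Or.inl h'
            · exact Or.inr (Or.inl h')
            · exact Or.inr (Or.inr (Or.inl h'))
            · exact Or.inr (Or.inr (Or.inl (simplicial_mono hs hsimp)))
            · exact Or.inr (Or.inr (Or.inr (Or.inr h')))
        · -- Bd b ⊆ Bd a, b < a : shortcut
          have hacAdj : G.Adj a c :=
            adj_of_mem_Bd (hsub (mem_Bd_of_adj hadj.2)) (Ne.symm hac)
          obtain ⟨hsubl, hch', hh', hl'⟩ := shortcut_build hch hacAdj hh hl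
          refine ih _ (by
            have h5 := hsubl.length_le
            have h6 := cnt_sublist (C := C) hsubl
            simp only [List.length_append, List.length_cons] at hN h5 ⊢
            omega) hch' hh' hl' ?_
            (fun x hx => hdup x (lt_of_lt_of_le hx (hsubl.count_le x)))
          intro x y z hct
          rcases ct_shortcut (b := b) hct with h | ⟨h1, h2, h⟩ | ⟨h1, h2, h⟩
          · exact hP _ _ _ h
          · rw [h1, h2]
            rcases hP x a b h with h' | h' | h' | h' | ⟨hs, hl2⟩
            · exact Or.inl h'
            · exact Or.inr (Or.inl h')
            · exact Or.inr (Or.inr (Or.inl h'))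
            · exact Or.inr (Or.inr (Or.inr (Or.inl h')))
            · exact absurd hlt (lt_asymm hl2)
          · rw [h1, h2]
            rcases hP b c z h with h' | h' | h' | ⟨hs, hl2⟩ | h'
            · exact Or.inl h'
            · exact Or.inr (Or.inl h')
            · exact Or.inr (Or.inr (Or.inl h'))
            · exact Or.inr (Or.inr (Or.inr (Or.inl ⟨hs.trans hsub, hl2.trans hlt⟩)))
            · exact Or.inr (Or.inr (Or.inr (Or.inr h')))
        · -- Bd b ⊆ Bd c, b < c : shortcut
          have hacAdj : G.Adj a c :=
            adj_symm (adj_of_mem_Bd (hsub (mem_Bd_of_adj (adj_symm hadj.1))) hac)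
          obtain ⟨hsubl, hch', hh', hl'⟩ := shortcut_build hch hacAdj hh hl
          refine ih _ (by
            have h5 := hsubl.length_le
            have h6 := cnt_sublist (C := C) hsubl
            simp only [List.length_append, List.length_cons] at hN h5 ⊢
            omega) hch' hh' hl' ?_
            (fun x hx => hdup x (lt_of_lt_of_le hx (hsubl.count_le x)))
          intro x y z hct
          rcases ct_shortcut (b := b) hct with h | ⟨h1, h2, h⟩ | ⟨h1, h2, h⟩
          · exact hP _ _ _ h
          · rw [h1, h2]
            rcases hP x a b h with h' | h' | h' | h' | ⟨hs, hl2⟩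
            · exact Or.inl h'
            · exact Or.inr (Or.inl h')
            · exact Or.inr (Or.inr (Or.inl h'))
            · exact Or.inr (Or.inr (Or.inr (Or.inl h')))
            · exact Or.inr (Or.inr (Or.inr (Or.inr ⟨hs.trans hsub, hl2.trans hlt⟩)))
          · rw [h1, h2]
            rcases hP b c z h with h' | h' | h' | ⟨hs, hl2⟩ | h'
            · exact Or.inl h'
            · exact Or.inr (Or.inl h')
            · exact Or.inr (Or.inr (Or.inl h'))
            · exact absurd hlt (lt_asymm hl2)
            · exact Or.inr (Or.inr (Or.inr (Or.inr h')))
      · -- all interior vertices in C : done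
        refine ⟨q, hnd, hch, hh, hl, ?_⟩
        intro a b c hct
        by_contra hbC
        obtain ⟨l1, l2, hp⟩ := hct
        exact hbad ⟨a, b, c, l1, l2, hp, hbC⟩
    · -- q has a duplicate : remove a loop
      obtain ⟨l1, x0, l2, l3, rfl⟩ := exists_dup hnd
      have hsubl : (l1 ++ x0 :: l3) <+ (l1 ++ x0 :: l2 ++ x0 :: l3) :=
        (List.sublist_append_left l1 (x0 :: l2)).append (List.Sublist.refl (x0 :: l3))
      have hch' : (l1 ++ x0 :: l3).Chain' G.Adj := by
        unfold List.Chain' at hch ⊢; rw [List.isChain_append] at hch ⊢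
        obtain ⟨c1, c2, seam⟩ := hch
        have h6 := List.isChain_append.mp c1
        exact ⟨h6.1, c2, by simpa using h6.2.2⟩
      have hh' : (l1 ++ x0 :: l3).head? = some v := by
        have hh0 : (l1 ++ x0 :: (l2 ++ x0 :: l3)).head? = some v := by
          rw [show l1 ++ x0 :: (l2 ++ x0 :: l3) = l1 ++ x0 :: l2 ++ x0 :: l3 by simp]
          exact hh
        exact (head?_append_cons l1 x0 l3 (l2 ++ x0 :: l3)).trans hh0
      have hl' : (l1 ++ x0 :: l3).getLast? = some w := by
        rw [getLast?_append_cons']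
        rw [getLast?_append_cons'] at hl
        exact hl
      have hx0C : x0 ∈ C := by
        refine hdup x0 ?_
        simp [List.count_append, List.count_cons]
        omega
      refine ih _ (by
        have h5 := hsubl.length_le
        have h6 := cnt_sublist (C := C) hsubl
        simp only [List.length_append, List.length_cons] at hN h5 ⊢
        omega) hch' hh' hl' ?_
        (fun x hx => hdup x (lt_of_lt_of_le hx (hsubl.count_le x)))
      intro a b c hct
      rcases ct_dedup (l2 := l2) hct with h | h
      · exact hP _ _ _ h
      · rw [h]
        exact Or.inl hx0C

lemma mconn_D2 (hG : G.Bidirected) {v w : V} {C : Set V} (hv : v ∉ C) (hw : w ∉ C)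
    (h : (G.gmin).MConn v w C) : G.MConn v w C := by
  classical
  obtain ⟨p, ⟨⟨hnd, hch⟩, htr⟩, hh, hl⟩ := h
  have hchG : p.Chain' G.Adj :=
    hch.imp fun {x y} hadj => (gmin_adj_iff hG x y).mp hadj
  have hP : ∀ a b c, ConsecTriple p a b c → Pinv G C a b c := by
    intro a b c hct
    have hadj := consecTriple_adj hchG hct
    by_cases hcol : (G.gmin).Collider a b c
    · obtain ⟨d, hdC, hanc⟩ := (htr a b c hct).1 hcol
      exact Or.inr (Or.inl ⟨d, hdC, gmin_anc_bd hG hanc⟩)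
    · have hside : ¬ (G.gmin).HeadAt a b ∨ ¬ (G.gmin).HeadAt c b := by
        by_contra hcon
        push_neg at hcon
        exact hcol ⟨hcon.1, hcon.2⟩
      rcases hside with hs | hs
      · rcases gmin_noncollider_P hG hadj.1 hs with h' | ⟨h1, h2⟩
        · exact Or.inr (Or.inr (Or.inl h'))
        · exact Or.inr (Or.inr (Or.inr (Or.inl ⟨h1, h2⟩)))
      · rcases gmin_noncollider_P hG (adj_symm hadj.2) hs with h' | ⟨h1, h2⟩
        · exact Or.inr (Or.inr (Or.inl h'))
        · exact Or.inr (Or.inr (Or.inr (Or.inr ⟨h1, h2⟩)))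
  have hdup : ∀ x, 1 < p.count x → x ∈ C := by
    intro x hx
    exact absurd (List.nodup_iff_count_le_one.mp hnd x) (by omega)
  obtain ⟨p', hp'⟩ := D2core hG _ p le_rfl hchG hh hl hP hdup
  exact gpath_mconn hG hp'

lemma gmin_markov (hG : G.Bidirected) : G.MarkovEquiv (G.gmin) := by
  intro v w C hne hv hw
  constructor
  · exact fun hsep hconn => hsep (mconn_D2 hG hv hw hconn)
  · exact fun hsep hconn => hsep (mconn_D1 hG hconn)

lemma gmin_maximal (hG : G.Bidirected) : (G.gmin).Maximal := by
  intro v w hne hnadj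
  refine ⟨∅, Set.notMem_empty v, Set.notMem_empty w, ?_⟩
  have hnG : ¬ G.Adj v w := fun h => hnadj ((gmin_adj_iff hG v w).mpr h)
  exact fun hconn =>
    (G_msep_empty hG hnG hne) (mconn_D2 hG (Set.notMem_empty v) (Set.notMem_empty w) hconn)

end

/-! ### Facts about a Markov equivalent maximal ancestral graph `Gm` -/

lemma consecTriple_three {x y z a b c : V} (h : ConsecTriple [x, y, z] a b c) :
    x = a ∧ y = b ∧ z = c := by
  obtain ⟨l1, l2, hl⟩ := h
  cases l1 with
  | nil =>
    simp only [List.nil_append] at hl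
    injection hl with h1 hl
    injection hl with h2 hl
    injection hl with h3 hl
    exact ⟨h1, h2, h3⟩
  | cons e l1' =>
    have := congrArg List.length hl
    simp [List.length_append] at this
    omega

lemma adj_mconn {H : MixedGraph V} {v w : V} (h : H.Adj v w) (C : Set V) :
    H.MConn v w C := by
  refine ⟨[v, w], ⟨⟨?_, ?_⟩, ?_⟩, by simp, by simp⟩
  · simp [adj_ne h]
  · exact List.isChain_cons_cons.mpr ⟨h, List.isChain_singleton w⟩
  · exact fun a b c hct => absurd hct (not_consecTriple_short (by simp))

lemma three_path {H : MixedGraph V} {x b y : V} (hxb : H.Adj x b)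
    (hby : H.Adj b y) (hxy : x ≠ y) (hnc : ¬ H.Collider x b y) :
    H.MConn x y ∅ := by
  refine ⟨[x, b, y], ⟨⟨?_, ?_⟩, ?_⟩, by simp, by simp⟩
  · simp [adj_ne hxb, adj_ne hby, hxy]
  · exact List.isChain_cons_cons.mpr ⟨hxb, List.isChain_cons_cons.mpr ⟨hby, List.isChain_singleton y⟩⟩
  · intro a b' c hct
    obtain ⟨h1, h2, h3⟩ := consecTriple_three hct
    subst h1; subst h2; subst h3
    exact ⟨fun hcol => absurd hcol hnc, fun _ => Set.notMem_empty _⟩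

section GmFacts

variable {Gm : MixedGraph V} (hG : G.Bidirected) (hGma : Gm.Ancestral)
  (hGmm : Gm.Maximal) (hme : G.MarkovEquiv Gm)

include hme in
lemma me_mconn {v w : V} {C : Set V} (hne : v ≠ w) (hv : v ∉ C) (hw : w ∉ C) :
    G.MConn v w C ↔ Gm.MConn v w C := by
  have h := hme v w C hne hv hw
  unfold MixedGraph.MSep at h
  constructor
  · intro hc
    by_contra hcc
    exact (h.mpr hcc) hc
  · intro hc
    by_contra hcc
    exact (h.mp hcc) hc

include hG hGmm hme in
lemma skel {v w : V} : G.Adj v w ↔ Gm.Adj v w := by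
  constructor
  · intro hadj
    by_contra hnadj
    obtain ⟨C, hvC, hwC, hsep⟩ := hGmm v w (adj_ne hadj) hnadj
    exact ((hme v w C (adj_ne hadj) hvC hwC).mpr hsep) (adj_mconn hadj C)
  · intro hadj
    by_contra hnG
    exact ((hme v w ∅ (adj_ne hadj) (Set.notMem_empty v)
      (Set.notMem_empty w)).mp (G_msep_empty hG hnG (adj_ne hadj)))
      (adj_mconn hadj ∅)

include hG hGmm hme in
lemma gm_three {x b y : V} (hxb : Gm.Adj x b) (hby : Gm.Adj b y) (hxy : x ≠ y)
    (hnc : ¬ Gm.Collider x b y) : G.Adj x y := by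
  have h1 : Gm.MConn x y ∅ := three_path hxb hby hxy hnc
  have h2 : G.MConn x y ∅ :=
    (me_mconn hme hxy (Set.notMem_empty x) (Set.notMem_empty y)).mpr h1
  exact G_mconn_empty hG h2 hxy

include hG hGmm hme in
lemma tails_implies_simplicial {b : V} (hnh : ∀ u, ¬ Gm.HeadAt u b) :
    G.Simplicial b := by
  intro x hx y hy hxy
  by_contra hnxy
  have hxb : x ≠ b := by
    rintro rfl
    exact hnxy (adj_of_mem_Bd hy (Ne.symm hxy))
  have hyb : y ≠ b := by
    rintro rfl
    exact hnxy (adj_symm (adj_of_mem_Bd hx hxy))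
  have hbx : G.Adj b x := adj_of_mem_Bd hx hxb
  have hby : G.Adj b y := adj_of_mem_Bd hy hyb
  have hxbm : Gm.Adj x b := (skel hG hGmm hme).mp (adj_symm hbx)
  have hbym : Gm.Adj b y := (skel hG hGmm hme).mp hby
  have hnc : ¬ Gm.Collider x b y := fun hcol => hnh x hcol.1
  exact hnxy (gm_three hG hGmm hme hxbm hbym hxy hnc)

include hG hGmm hme in
lemma gm_tail_bd {v w : V} (hvw : Gm.Adj v w) (hnh : ¬ Gm.HeadAt w v) :
    G.Bd v ⊆ G.Bd w := by
  intro x hx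
  by_cases hxw : x = w
  · subst hxw; exact self_mem_Bd x
  by_cases hxv : x = v
  · subst hxv
    exact mem_Bd_of_adj (adj_symm ((skel hG hGmm hme).mpr hvw))
  have hvx : G.Adj v x := adj_of_mem_Bd hx hxv
  by_contra hnwx
  have hxvm : Gm.Adj x v := (skel hG hGmm hme).mp (adj_symm hvx)
  have hnc : ¬ Gm.Collider x v w := fun hcol => hnh hcol.2
  have hxw' : G.Adj x w := gm_three hG hGmm hme hxvm hvw hxw hnc
  exact hnwx (mem_Bd_of_adj (adj_symm hxw'))

include hG hGmm hme in
lemma gm_dir_bd {v w : V} (h : Gm.Dir v w) : G.Bd v ⊆ G.Bd w := by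
  refine gm_tail_bd hG hGmm hme (fun h0 => by rw [show Gm.E v w = .arrowTo from h] at h0; cases h0) ?_
  have hm : Gm.E w v = .arrowFrom := by
    rw [Gm.symm]
    rw [show Gm.E v w = .arrowTo from h]
    rfl
  rintro (hh | hh) <;> rw [hm] at hh <;> cases hh

include hG hGmm hme in
lemma gm_undir_bd {v w : V} (h : Gm.Undir v w) : G.Bd v ⊆ G.Bd w := by
  refine gm_tail_bd hG hGmm hme (fun h0 => by rw [show Gm.E v w = .undir from h] at h0; cases h0) ?_
  have hm : Gm.E w v = .undir := by
    rw [Gm.symm]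
    rw [show Gm.E v w = .undir from h]
    rfl
  rintro (hh | hh) <;> rw [hm] at hh <;> cases hh

include hG hGma hGmm hme in
lemma gm_undir_simp {v w : V} (h : Gm.Undir v w) :
    G.Simplicial v ∧ G.Simplicial w := by
  have hv := tails_implies_simplicial hG hGmm hme (fun u => hGma.2.1 v w h u)
  have hw' : Gm.Undir w v := by
    show Gm.E w v = .undir
    rw [Gm.symm, show Gm.E v w = .undir from h]
    rfl
  have hw := tails_implies_simplicial hG hGmm hme (fun u => hGma.2.1 w v hw' u)
  exact ⟨hv, hw⟩

end GmFacts

/-! ### Construction of the linear order -/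

noncomputable def mkLO (s : V → V → Prop) (h : IsLinearOrder V s) : LinearOrder V :=
  haveI := h
  { le := s
    le_refl := Std.Refl.refl
    le_trans := fun a b c => IsTrans.trans a b c
    le_antisymm := fun a b => Std.Antisymm.antisymm a b
    le_total := Std.Total.total
    toDecidableLE := fun _ _ => Classical.propDecidable _ }

section OrderSec

variable {Gm : MixedGraph V} (hG : G.Bidirected) (hGma : Gm.Ancestral)
  (hGmm : Gm.Maximal) (hme : G.MarkovEquiv Gm)

/-- The relation to extend: directed edges of `Gm` plus strict boundary
containment. -/
def rr (G Gm : MixedGraph V) (a b : V) : Prop := Gm.Dir a b ∨ G.Bd a ⊂ G.Bd b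

include hG hGmm hme in
lemma rr_bd {a b : V} (h : rr G Gm a b) : G.Bd a ⊆ G.Bd b := by
  rcases h with h | h
  · exact gm_dir_bd hG hGmm hme h
  · exact h.subset

include hG hGmm hme in
lemma rrt_bd {a b : V} (h : Relation.TransGen (rr G Gm) a b) :
    G.Bd a ⊆ G.Bd b := by
  induction h with
  | single h => exact rr_bd hG hGmm hme h
  | tail _ h ih => exact ih.trans (rr_bd hG hGmm hme h)

include hG hGmm hme in
lemma rrt_dir {a b : V} (h : Relation.TransGen (rr G Gm) a b)
    (hba : G.Bd b ⊆ G.Bd a) : Relation.TransGen Gm.Dir a b := by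
  induction h with
  | single h =>
    rcases h with h | h
    · exact Relation.TransGen.single h
    · exact absurd (Set.Subset.antisymm h.subset hba) (ne_of_ssubset h)
  | tail ht h ih =>
    have h1 := rrt_bd hG hGmm hme ht
    rcases h with h | h
    · have h2 := gm_dir_bd hG hGmm hme h
      exact (ih (h2.trans hba)).tail h
    · exact absurd (Set.Subset.antisymm h.subset (hba.trans h1)) (ne_of_ssubset h)

include hG hGma hGmm hme in
lemma rr_irrefl (x : V) : ¬ Relation.TransGen (rr G Gm) x x := by
  intro h
  have h1 : Relation.TransGen Gm.Dir x x := rrt_dir hG hGmm hme h subset_rfl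
  obtain ⟨c, h2, h3⟩ := Relation.TransGen.head'_iff.mp h1
  exact hGma.1 x c h2 h3

include hG hGma hGmm hme in
lemma exists_good_order :
    ∃ inst : LinearOrder V,
      (∀ a b : V, G.Bd a ⊂ G.Bd b → inst.lt a b) ∧
      (∀ a b : V, Gm.Dir a b → inst.lt a b) := by
  classical
  let le0 : V → V → Prop := fun a b => Relation.TransGen (rr G Gm) a b ∨ a = b
  haveI hpo : IsPartialOrder V le0 :=
    { refl := fun a => Or.inr rfl
      trans := by
        rintro a b c (h1 | rfl) (h2 | rfl)
        · exact Or.inl (h1.trans h2)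
        · exact Or.inl h1
        · exact Or.inl h2
        · exact Or.inr rfl
      antisymm := by
        rintro a b (h1 | rfl) (h2 | h3)
        · exact absurd (h1.trans h2) (rr_irrefl hG hGma hGmm hme a)
        · exact h3.symm
        · rfl
        · rfl }
  obtain ⟨s, hlin, hsub⟩ := extend_partialOrder le0
  haveI := hlin
  have hlt : ∀ a b : V, rr G Gm a b → (mkLO s hlin).lt a b := by
    intro a b h
    have hs : s a b := hsub a b (Or.inl (Relation.TransGen.single h))
    refine ⟨hs, fun hba => ?_⟩
    have heq : a = b := Std.Antisymm.antisymm a b hs hba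
    rw [← heq] at h
    exact rr_irrefl hG hGma hGmm hme a (Relation.TransGen.single h)
  exact ⟨mkLO s hlin, fun a b h => hlt a b (Or.inr h), fun a b h => hlt a b (Or.inl h)⟩

end OrderSec

/-! ### Arrowhead count as a sum -/

def weight : EType → ℕ
  | .arrowTo => 1
  | .bidir => 1
  | _ => 0

lemma arr_eq_sum [Fintype V] (H : MixedGraph V) :
    H.arr = ∑ p : V × V, weight (H.E p.1 p.2) := by
  classical
  unfold MixedGraph.arr
  have h1 : {p : V × V | H.Dir p.1 p.2} =
      ↑(Finset.univ.filter (fun p : V × V => H.E p.1 p.2 = EType.arrowTo)) := by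
    ext p
    simp [MixedGraph.Dir]
  have h2 : {p : V × V | H.Bidir p.1 p.2} =
      ↑(Finset.univ.filter (fun p : V × V => H.E p.1 p.2 = EType.bidir)) := by
    ext p
    simp [MixedGraph.Bidir]
  rw [h1, h2, Set.ncard_coe_finset, Set.ncard_coe_finset, Finset.card_filter,
    Finset.card_filter, ← Finset.sum_add_distrib]
  refine Finset.sum_congr rfl fun p _ => ?_
  cases h : H.E p.1 p.2 <;> simp [weight, h]

/-! ### Final comparison of `Gm` with `gmin` -/

lemma mixedGraph_ext {G1 G2 : MixedGraph V} (h : G1.E = G2.E) : G1 = G2 := by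
  cases G1; cases G2
  cases h
  rfl

section Final

variable {Gm : MixedGraph V} [LinearOrder V] (hG : G.Bidirected)
  (hGma : Gm.Ancestral) (hGmm : Gm.Maximal) (hme : G.MarkovEquiv Gm)
  (hord2 : ∀ a b : V, Gm.Dir a b → a < b)

include hG hGma hGmm hme hord2 in
lemma head_lemma {v w : V} (hgm : G.gminE v w = .arrowTo) :
    Gm.E v w = .arrowTo ∨ Gm.E v w = .bidir := by
  obtain ⟨hEb, hnw, hcase⟩ := gmin_arrowTo hG hgm
  have hadjG : G.Adj v w := by simp [MixedGraph.Adj, hEb]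
  have hadjm : Gm.Adj v w := (skel hG hGmm hme).mp hadjG
  cases hE : Gm.E v w
  · exact absurd hE hadjm
  · exact absurd (gm_undir_simp hG hGma hGmm hme hE).2 hnw
  · exact Or.inl rfl
  · have hdir : Gm.Dir w v := by
      show Gm.E w v = .arrowTo
      rw [Gm.symm, hE]
      rfl
    have hbd := gm_dir_bd hG hGmm hme hdir
    rcases hcase with hs | ⟨-, -, hlt⟩
    · exact absurd (simplicial_mono hbd hs) hnw
    · exact absurd (hord2 w v hdir) (lt_asymm hlt)
  · exact Or.inr rfl

include hG hGma hGmm hme hord2 in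
lemma bidir_lemma {v w : V} (hgm : G.gminE v w = .bidir) : Gm.E v w = .bidir := by
  obtain ⟨hEb, hnv, hnw, hc1, hc2⟩ := gmin_bidir hG hgm
  have hadjG : G.Adj v w := by simp [MixedGraph.Adj, hEb]
  have hadjm : Gm.Adj v w := (skel hG hGmm hme).mp hadjG
  cases hE : Gm.E v w
  · exact absurd hE hadjm
  · exact absurd (gm_undir_simp hG hGma hGmm hme hE).1 hnv
  · exact absurd ⟨gm_dir_bd hG hGmm hme hE, hord2 v w hE⟩ hc1
  · have hdir : Gm.Dir w v := by
      show Gm.E w v = .arrowTo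
      rw [Gm.symm, hE]
      rfl
    exact absurd ⟨gm_dir_bd hG hGmm hme hdir, hord2 w v hdir⟩ hc2
  · rfl

include hG hGma hGmm hme hord2 in
lemma weight_le (v w : V) : weight (G.gminE v w) ≤ weight (Gm.E v w) := by
  cases hgm : G.gminE v w
  · exact Nat.zero_le _
  · exact Nat.zero_le _
  · rcases head_lemma hG hGma hGmm hme hord2 hgm with h | h <;> rw [h] <;>
      simp [weight]
  · exact Nat.zero_le _
  · rw [bidir_lemma hG hGma hGmm hme hord2 hgm]

include hG hGma hGmm hme hord2 in
lemma E_eq (hw : ∀ v w : V, weight (G.gminE v w) = weight (Gm.E v w)) :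
    ∀ v w : V, Gm.E v w = G.gminE v w := by
  intro v w
  cases hgm : G.gminE v w
  · have hga : ¬ G.Adj v w := fun h => ((gmin_adj_iff hG v w).mpr h) hgm
    have hnm : ¬ Gm.Adj v w := fun h => hga ((skel hG hGmm hme).mpr h)
    exact not_not.mp hnm
  · obtain ⟨hEb, hsv, hsw⟩ := gmin_undir hG hgm
    have hadjm : Gm.Adj v w := (skel hG hGmm hme).mp (by simp [MixedGraph.Adj, hEb])
    have hwv := hw v w
    rw [hgm] at hwv
    cases hE : Gm.E v w
    · exact absurd hE hadjm
    · rfl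
    · rw [hE] at hwv; simp [weight] at hwv
    · have h2 := hw w v
      rw [gminE_symm, hgm] at h2
      have h3 : Gm.E w v = .arrowTo := by rw [Gm.symm, hE]; rfl
      rw [h3] at h2
      simp [weight, EType.mirror] at h2
    · rw [hE] at hwv; simp [weight] at hwv
  · rcases head_lemma hG hGma hGmm hme hord2 hgm with h | h
    · exact h
    · have h2 := hw w v
      rw [gminE_symm, hgm] at h2
      have h3 : Gm.E w v = .bidir := by rw [Gm.symm, h]; rfl
      rw [h3] at h2
      simp [weight, EType.mirror] at h2
  · have hgm' : G.gminE w v = .arrowTo := by rw [gminE_symm, hgm]; rfl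
    rcases head_lemma hG hGma hGmm hme hord2 hgm' with h | h
    · have h4 := Gm.symm v w
      rw [h] at h4
      cases hE : Gm.E v w
      · rw [hE] at h4; simp [EType.mirror] at h4
      · rw [hE] at h4; simp [EType.mirror] at h4
      · rw [hE] at h4; simp [EType.mirror] at h4
      · rfl
      · rw [hE] at h4; simp [EType.mirror] at h4
    · have h4 := Gm.symm v w
      rw [h] at h4
      have h5 : Gm.E v w = .bidir := by
        cases hE : Gm.E v w <;> rw [hE] at h4 <;>
          first
            | rfl
            | simp [EType.mirror] at h4
      have hwv := hw v w
      rw [hgm, h5] at hwv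
      simp [weight] at hwv
  · exact bidir_lemma hG hGma hGmm hme hord2 hgm

end Final

end StmtAux

/-- Every minimally oriented graph of a bi-directed graph
`G` arises from Algorithm 4.2 for some total order extending strict
boundary containment. -/
theorem stmt14 {V : Type} [Finite V] (G Gm : MixedGraph V) (hG : G.Bidirected)
    (hmin : MinOriented G Gm) :
    ∃ inst : LinearOrder V,
      (∀ v w : V, G.Bd v ⊂ G.Bd w → inst.lt v w) ∧
      Gm = @MixedGraph.gmin V G inst := by
  classical
  obtain ⟨hGma, hGmm, hme, hminimal⟩ := hmin
  obtain ⟨inst, hord1, hord2⟩ := StmtAux.exists_good_order hG hGma hGmm hme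
  refine ⟨inst, fun v w h => hord1 v w h, ?_⟩
  letI := inst
  haveI : Fintype V := Fintype.ofFinite V
  have harr : Gm.arr ≤ (G.gmin).arr :=
    hminimal _ (StmtAux.gmin_ancestral hG) (StmtAux.gmin_maximal hG)
      (StmtAux.gmin_markov hG)
  have hle : ∀ p ∈ (Finset.univ : Finset (V × V)),
      StmtAux.weight (G.gminE p.1 p.2) ≤ StmtAux.weight (Gm.E p.1 p.2) :=
    fun p _ => StmtAux.weight_le hG hGma hGmm hme hord2 p.1 p.2
  have hsums : ∑ p : V × V, StmtAux.weight (G.gminE p.1 p.2) =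
      ∑ p : V × V, StmtAux.weight (Gm.E p.1 p.2) := by
    refine le_antisymm (Finset.sum_le_sum hle) ?_
    calc ∑ p : V × V, StmtAux.weight (Gm.E p.1 p.2) = Gm.arr :=
          (StmtAux.arr_eq_sum Gm).symm
      _ ≤ (G.gmin).arr := harr
      _ = ∑ p : V × V, StmtAux.weight ((G.gmin).E p.1 p.2) := StmtAux.arr_eq_sum _
      _ = ∑ p : V × V, StmtAux.weight (G.gminE p.1 p.2) := rfl
  have heq := (Finset.sum_eq_sum_iff_of_le hle).mp hsums
  have hw : ∀ v w : V, StmtAux.weight (G.gminE v w) = StmtAux.weight (Gm.E v w) :=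
    fun v w => heq (v, w) (Finset.mem_univ _)
  have hE := StmtAux.E_eq hG hGma hGmm hme hord2 hw
  exact StmtAux.mixedGraph_ext (funext fun v => funext fun w => hE v w)
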